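/- Let 0 < a_1 ≤ ... ≤ a_n with a_1^{a_n} ≥ e^{-1}, and suppose 1 ≤ i < k ≤ n and 1 ≤ j < l ≤ n. Then a_i^{a_j} + a_k^{a_l} ≥ a_i^{a_l} + a_k^{a_j}. -/
import Mathlib

open Real Set

private lemma lemA {x y t q : ℝ} (hx : 0 < x) (hxy : x ≤ y) (ht : 0 < t) (htq : t ≤ q)
    (hC : Real.exp (-1) ≤ x ^ q) :
    x ^ t * Real.log x ≤ y ^ t * Real.log y := by
  have hq : 0 < q := lt_of_lt_of_le ht htq
  have hqlx : -1 ≤ q * Real.log x := by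
    have := Real.log_le_log (Real.exp_pos _) hC
    rwa [Real.log_exp, Real.log_rpow hx] at this
  have key : MonotoneOn (fun u : ℝ => u ^ t * Real.log u) (Set.Icc x y) := by
    have hderiv : ∀ u ∈ interior (Set.Icc x y),
        HasDerivAt (fun u : ℝ => u ^ t * Real.log u)
          (t * u ^ (t - 1) * Real.log u + u ^ t * u⁻¹) u := by
      intro u hu
      rw [interior_Icc] at hu
      have hu0 : 0 < u := lt_trans hx hu.1
      exact (Real.hasDerivAt_rpow_const (Or.inl hu0.ne')).mul (Real.hasDerivAt_log hu0.ne')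
    apply monotoneOn_of_deriv_nonneg (convex_Icc x y)
    · apply ContinuousOn.mul
      · exact (continuousOn_id.rpow_const fun u hu => Or.inl (lt_of_lt_of_le hx hu.1).ne')
      · exact Real.continuousOn_log.mono fun u hu => (lt_of_lt_of_le hx hu.1).ne'
    · intro u hu
      exact (hderiv u hu).differentiableAt.differentiableWithinAt
    · intro u hu
      rw [(hderiv u hu).deriv]
      rw [interior_Icc] at hu
      have hu0 : 0 < u := lt_trans hx hu.1
      have h1 : u ^ t * u⁻¹ = u ^ (t - 1) := by
        rw [Real.rpow_sub_one hu0.ne', div_eq_mul_inv]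
      rw [h1]
      have h2 : t * u ^ (t - 1) * Real.log u + u ^ (t - 1)
          = u ^ (t - 1) * (t * Real.log u + 1) := by ring
      rw [h2]
      apply mul_nonneg (Real.rpow_nonneg hu0.le _)
      rcases le_or_gt 0 (Real.log u) with h | h
      · nlinarith
      · have hlu : Real.log x ≤ Real.log u := Real.log_le_log hx hu.1.le
        nlinarith
  have := key (Set.left_mem_Icc.2 hxy) (Set.right_mem_Icc.2 hxy) hxy
  simpa using this

private lemma lemB {x y p q : ℝ} (hx : 0 < x) (hxy : x ≤ y) (hp : 0 < p) (hpq : p ≤ q)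
    (hC : Real.exp (-1) ≤ x ^ q) :
    x ^ q + y ^ p ≤ x ^ p + y ^ q := by
  have hy : 0 < y := lt_of_lt_of_le hx hxy
  have key : MonotoneOn (fun t : ℝ => y ^ t - x ^ t) (Set.Icc p q) := by
    have hderiv : ∀ t : ℝ, HasDerivAt (fun t : ℝ => y ^ t - x ^ t)
        (y ^ t * Real.log y - x ^ t * Real.log x) t := fun t =>
      ((Real.hasStrictDerivAt_const_rpow hy t).hasDerivAt).sub
        ((Real.hasStrictDerivAt_const_rpow hx t).hasDerivAt)
    apply monotoneOn_of_deriv_nonneg (convex_Icc p q)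
    · exact fun t _ => ((hderiv t).continuousAt.continuousWithinAt)
    · exact fun t _ => (hderiv t).differentiableAt.differentiableWithinAt
    · intro t ht
      rw [(hderiv t).deriv]
      rw [interior_Icc] at ht
      have h := lemA hx hxy (lt_trans hp ht.1) ht.2.le hC
      linarith
  have := key (Set.left_mem_Icc.2 hpq) (Set.right_mem_Icc.2 hpq) hpq
  simp only at this
  linarith

theorem stmt_4 (n : ℕ) (hn : 2 ≤ n) (a : Fin n → ℝ)
    (hpos : ∀ i, 0 < a i) (hmono : Monotone a)
    (hC : a ⟨0, by omega⟩ ^ a ⟨n - 1, by omega⟩ ≥ Real.exp (-1))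
    (i k j l : Fin n) (hik : i < k) (hjl : j < l) :
    a i ^ a l + a k ^ a j ≤ a i ^ a j + a k ^ a l := by
  set x := a i with hxdef
  set y := a k
  set p := a j
  set q := a l
  have hx : 0 < x := hpos i
  have hxy : x ≤ y := hmono hik.le
  have hp : 0 < p := hpos j
  have hpq : p ≤ q := hmono hjl.le
  have hq : 0 < q := lt_of_lt_of_le hp hpq
  have hxq : Real.exp (-1) ≤ x ^ q := by
    rcases le_or_gt 1 x with h1 | h1
    · calc Real.exp (-1) ≤ 1 := by
            rw [show (1:ℝ) = Real.exp 0 by simp]; exact Real.exp_le_exp.2 (by norm_num)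
        _ ≤ x ^ q := Real.one_le_rpow h1 hq.le
    · have h0i : (⟨0, by omega⟩ : Fin n) ≤ i := by
        exact Fin.mk_le_of_le_val (Nat.zero_le _)
      have hlN : l ≤ (⟨n - 1, by omega⟩ : Fin n) := by
        apply Fin.le_def.2
        simp only
        omega
      have ha0 : a ⟨0, by omega⟩ ≤ x := hmono h0i
      have haN : q ≤ a ⟨n - 1, by omega⟩ := hmono hlN
      calc Real.exp (-1) ≤ a ⟨0, by omega⟩ ^ a ⟨n - 1, by omega⟩ := hC
        _ ≤ x ^ a ⟨n - 1, by omega⟩ :=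
            Real.rpow_le_rpow (hpos _).le ha0 (lt_of_lt_of_le hq haN).le
        _ ≤ x ^ q := Real.rpow_le_rpow_of_exponent_ge hx h1.le haN
  linarith [lemB hx hxy hp hpq hxq]
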